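/- Let G be a group, φ an automorphism of G, Γ = G ⋊_φ ℤ, K ⊆ Γ a subset, g ∈ G and r ∈ ℤ with r ≠ 0. Then t^r g has a conjugate in K (i.e., there exists γ ∈ Γ with γ⁻¹ (t^r g) γ ∈ K) if and only if there exist a natural number j with j < |r| and an element v ∈ G such that φ^r(v)⁻¹ · φ^j(g) · v ∈ K_r, where K_r = { x ∈ G : t^r x ∈ K }. -/

import Mathlib

/-- The semidirect product `Γ = G ⋊_φ ℤ`, built so that `t⁻¹ g t = φ g`
for the generator `t` of the `ℤ`-factor. -/
abbrev SDP (G : Type*) [Group G] (φ : MulAut G) :=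
  SemidirectProduct G (Multiplicative ℤ) (zpowersHom (MulAut G) φ⁻¹)

/-- The generator `t` of the `ℤ`-factor of `G ⋊_φ ℤ`. -/
def tgen {G : Type*} [Group G] (φ : MulAut G) : SDP G φ :=
  SemidirectProduct.inr (Multiplicative.ofAdd 1)

/-- `K_r = { x ∈ G : t^r x ∈ K }` for a subset `K ⊆ G ⋊_φ ℤ`. -/
def Kset {G : Type*} [Group G] (φ : MulAut G) (K : Set (SDP G φ)) (r : ℤ) : Set G :=
  {x : G | tgen φ ^ r * SemidirectProduct.inl x ∈ K}

lemma tgen_zpow {G : Type*} [Group G] (φ : MulAut G) (a : ℤ) :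
    tgen φ ^ a = SemidirectProduct.inr (Multiplicative.ofAdd a) := by
  rw [tgen, ← map_zpow SemidirectProduct.inr]
  congr 1
  simp [← ofAdd_zsmul]

lemma tpow_mul_inl {G : Type*} [Group G] (φ : MulAut G) (a : ℤ) (v : G) :
    tgen φ ^ a * SemidirectProduct.inl v =
      ⟨(φ ^ (-a)) v, Multiplicative.ofAdd a⟩ := by
  rw [tgen_zpow]
  ext <;> simp [SemidirectProduct.mul_left, SemidirectProduct.mul_right, zpow_neg]

lemma conj_formula {G : Type*} [Group G] (φ : MulAut G) (g v : G) (r a : ℤ) :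
    (tgen φ ^ a * SemidirectProduct.inl v)⁻¹ * (tgen φ ^ r * SemidirectProduct.inl g) *
        (tgen φ ^ a * SemidirectProduct.inl v) =
      tgen φ ^ r * SemidirectProduct.inl (((φ ^ r) v)⁻¹ * (φ ^ a) g * v) := by
  rw [tpow_mul_inl, tpow_mul_inl, tpow_mul_inl]
  ext
  · simp [SemidirectProduct.mul_left, SemidirectProduct.mul_right, ← MulAut.mul_apply,
      ← zpow_add, ← zpow_neg]
    rw [add_comm]
  · simp [SemidirectProduct.mul_right]

lemma surj_form {G : Type*} [Group G] (φ : MulAut G) (γ : SDP G φ) :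
    ∃ (a : ℤ) (v : G), γ = tgen φ ^ a * SemidirectProduct.inl v := by
  refine ⟨Multiplicative.toAdd γ.right, (φ ^ Multiplicative.toAdd γ.right) γ.left, ?_⟩
  rw [tpow_mul_inl]
  ext
  · simp [← MulAut.mul_apply, ← zpow_add]
  · simp

lemma shift_identity {G : Type*} [Group G] (φ : MulAut G) (g v : G) (r a : ℤ) :
    ((φ ^ r) (((φ ^ a) g)⁻¹ * v))⁻¹ * (φ ^ a) g * (((φ ^ a) g)⁻¹ * v) =
      ((φ ^ r) v)⁻¹ * (φ ^ (a + r)) g * v := by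
  simp only [map_mul, map_inv, mul_inv_rev, inv_inv, ← MulAut.mul_apply, ← zpow_add]
  rw [add_comm r a]
  group

/-- For `r ≠ 0`, `t^r g` has a conjugate in `K` iff there are `j < |r|` and `v ∈ G`
with `φ^r(v)⁻¹ φ^j(g) v ∈ K_r`. -/
theorem conj_in_K_iff_twisted_bounded {G : Type*} [Group G] (φ : MulAut G)
    (K : Set (SDP G φ)) (g : G) (r : ℤ) (hr : r ≠ 0) :
    (∃ γ : SDP G φ, γ⁻¹ * (tgen φ ^ r * SemidirectProduct.inl g) * γ ∈ K) ↔
      ∃ j : ℕ, j < r.natAbs ∧ ∃ v : G, ((φ ^ r) v)⁻¹ * (φ ^ j) g * v ∈ Kset φ K r := by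
  set P : ℤ → Prop := fun a => ∃ v : G, ((φ ^ r) v)⁻¹ * (φ ^ a) g * v ∈ Kset φ K r with hP
  have hper : ∀ a : ℤ, P (a + r) ↔ P a := by
    intro a
    constructor
    · rintro ⟨v, hv⟩
      exact ⟨((φ ^ a) g)⁻¹ * v, by rwa [shift_identity]⟩
    · rintro ⟨w, hw⟩
      refine ⟨(φ ^ a) g * w, ?_⟩
      rw [← shift_identity, inv_mul_cancel_left]
      exact hw
  set s : ℤ := (r.natAbs : ℤ) with hs_def
  have hs0 : 0 < s := by
    simp only [hs_def]
    exact_mod_cast Int.natAbs_pos.mpr hr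
  have hs : ∀ a : ℤ, P (a + s) ↔ P a := by
    intro a
    rcases Int.natAbs_eq r with h | h
    · rw [← h] at hs_def; rw [hs_def]; exact hper a
    · have : s = -r := by omega
      rw [this]
      have := hper (a - r)
      rw [sub_add_cancel] at this
      rw [show a + -r = a - r by ring]
      exact this.symm
  have hmul : ∀ (n : ℤ) (a : ℤ), P (a + n * s) ↔ P a := by
    intro n
    induction n using Int.induction_on with
    | zero => simp
    | succ k ih =>
      intro a
      rw [show a + (k + 1 : ℤ) * s = (a + k * s) + s by ring, hs, ih]
    | pred k ih =>
      intro a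
      have h := hs (a + (-(k : ℤ) - 1) * s)
      rw [show a + (-(k : ℤ) - 1) * s + s = a + -(k : ℤ) * s by ring] at h
      exact h.symm.trans (ih a)
  have key : ∀ a : ℤ, P a ↔ P (a % s) := by
    intro a
    have h := hmul (a / s) (a % s)
    rw [show a % s + a / s * s = a from Int.emod_add_ediv_mul a s] at h
    exact h
  constructor
  · rintro ⟨γ, hγ⟩
    obtain ⟨a, v, rfl⟩ := surj_form φ γ
    rw [conj_formula] at hγ
    have hPa : P a := ⟨v, hγ⟩
    rw [key a] at hPa
    obtain ⟨w, hw⟩ := hPa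
    refine ⟨(a % s).toNat, ?_, w, ?_⟩
    · have h1 : a % s < s := Int.emod_lt_of_pos a hs0
      omega
    · have h2 : ((a % s).toNat : ℤ) = a % s := Int.toNat_of_nonneg (Int.emod_nonneg a (by omega))
      rwa [show (φ ^ (a % s).toNat : MulAut G) = φ ^ ((a % s).toNat : ℤ) by
        rw [zpow_natCast], h2]
  · rintro ⟨j, hj, v, hv⟩
    refine ⟨tgen φ ^ (j : ℤ) * SemidirectProduct.inl v, ?_⟩
    rw [conj_formula]
    rwa [show (φ ^ (j : ℤ) : MulAut G) = φ ^ j by rw [zpow_natCast]]
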